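/- Assume in addition that the augmented vector field F : ℝ⁴ⁿ → ℝ⁴ⁿ, F(p,q,x,y) = (-K₁₂(p,q)(∇_q H(x,q) + Ω(q-y)), K₁₂(p,q)ᵀ(∇_p H(p,y) - Ω(p-x)), -K₁₂(x,y)(∇_y H(p,y) + Ω(y-q)), K₁₂(x,y)ᵀ(∇_x H(x,q) + Ω(x-p))) is Lipschitz continuous. Let (P,Q) : [0,T] → ℝⁿ × ℝⁿ solve the original system P' = -K₁₂(P,Q)∇_Q H(P,Q), Q' = K₁₂(P,Q)ᵀ∇_P H(P,Q), and let (p,q,x,y) : [0,T] → ℝ⁴ⁿ solve the augmented system with initial data p(0) = x(0) = P(0) and q(0) = y(0) = Q(0). Then p(t) = x(t) = P(t) and q(t) = y(t) = Q(t) for all t ∈ [0,T]. -/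

import Mathlib

open Matrix

/- Gradient of H(P,Q) with respect to the first block of variables. -/
noncomputable def gradFst (n : ℕ) (H : (Fin n → ℝ) × (Fin n → ℝ) → ℝ)
    (P Q : Fin n → ℝ) : Fin n → ℝ :=
  fun i => fderiv ℝ (fun p => H (p, Q)) P (Pi.single i 1)

/- Gradient of H(P,Q) with respect to the second block of variables. -/
noncomputable def gradSnd (n : ℕ) (H : (Fin n → ℝ) × (Fin n → ℝ) → ℝ)
    (P Q : Fin n → ℝ) : Fin n → ℝ :=
  fun i => fderiv ℝ (fun q => H (P, q)) Q (Pi.single i 1)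

/-- If the augmented vector field is Lipschitz, (P,Q) solves the original system on [0,T]
and (p,q,x,y) solves the augmented system with initial data p(0) = x(0) = P(0),
q(0) = y(0) = Q(0), then p = x = P and q = y = Q on [0,T]. -/
theorem augmented_solution_eq_original
    (n : ℕ)
    (K12 : (Fin n → ℝ) × (Fin n → ℝ) → Matrix (Fin n) (Fin n) ℝ)
    (hK : Continuous K12)
    (H : (Fin n → ℝ) × (Fin n → ℝ) → ℝ) (hH : ContDiff ℝ 1 H)
    (Ω : ℝ) (T : ℝ) (hT : 0 ≤ T)
    -- the augmented vector field F is Lipschitz continuous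
    (hLip : ∃ L : NNReal, LipschitzWith L
      (fun z : (Fin n → ℝ) × (Fin n → ℝ) × (Fin n → ℝ) × (Fin n → ℝ) =>
        (-(K12 (z.1, z.2.1)).mulVec (gradSnd n H z.2.2.1 z.2.1 + Ω • (z.2.1 - z.2.2.2)),
         (K12 (z.1, z.2.1))ᵀ.mulVec (gradFst n H z.1 z.2.2.2 - Ω • (z.1 - z.2.2.1)),
         -(K12 (z.2.2.1, z.2.2.2)).mulVec (gradSnd n H z.1 z.2.2.2 + Ω • (z.2.2.2 - z.2.1)),
         (K12 (z.2.2.1, z.2.2.2))ᵀ.mulVec (gradFst n H z.2.2.1 z.2.1 + Ω • (z.2.2.1 - z.1)))))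
    -- (P,Q) solves the original system on [0,T]
    (P Q : ℝ → Fin n → ℝ)
    (hP : ∀ t ∈ Set.Icc 0 T, HasDerivWithinAt P
      (-(K12 (P t, Q t)).mulVec (gradSnd n H (P t) (Q t))) (Set.Icc 0 T) t)
    (hQ : ∀ t ∈ Set.Icc 0 T, HasDerivWithinAt Q
      ((K12 (P t, Q t))ᵀ.mulVec (gradFst n H (P t) (Q t))) (Set.Icc 0 T) t)
    -- (p,q,x,y) solves the augmented system on [0,T]
    (p q x y : ℝ → Fin n → ℝ)
    (hp : ∀ t ∈ Set.Icc 0 T, HasDerivWithinAt p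
      (-(K12 (p t, q t)).mulVec (gradSnd n H (x t) (q t) + Ω • (q t - y t))) (Set.Icc 0 T) t)
    (hq : ∀ t ∈ Set.Icc 0 T, HasDerivWithinAt q
      ((K12 (p t, q t))ᵀ.mulVec (gradFst n H (p t) (y t) - Ω • (p t - x t))) (Set.Icc 0 T) t)
    (hx : ∀ t ∈ Set.Icc 0 T, HasDerivWithinAt x
      (-(K12 (x t, y t)).mulVec (gradSnd n H (p t) (y t) + Ω • (y t - q t))) (Set.Icc 0 T) t)
    (hy : ∀ t ∈ Set.Icc 0 T, HasDerivWithinAt y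
      ((K12 (x t, y t))ᵀ.mulVec (gradFst n H (x t) (q t) + Ω • (x t - p t))) (Set.Icc 0 T) t)
    -- initial data
    (hp0 : p 0 = P 0) (hx0 : x 0 = P 0) (hq0 : q 0 = Q 0) (hy0 : y 0 = Q 0) :
    ∀ t ∈ Set.Icc 0 T, p t = P t ∧ x t = P t ∧ q t = Q t ∧ y t = Q t := by
  obtain ⟨L, hF⟩ := hLip
  set F : ((Fin n → ℝ) × (Fin n → ℝ) × (Fin n → ℝ) × (Fin n → ℝ)) →
      ((Fin n → ℝ) × (Fin n → ℝ) × (Fin n → ℝ) × (Fin n → ℝ)) :=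
    (fun z : (Fin n → ℝ) × (Fin n → ℝ) × (Fin n → ℝ) × (Fin n → ℝ) =>
        (-(K12 (z.1, z.2.1)).mulVec (gradSnd n H z.2.2.1 z.2.1 + Ω • (z.2.1 - z.2.2.2)),
         (K12 (z.1, z.2.1))ᵀ.mulVec (gradFst n H z.1 z.2.2.2 - Ω • (z.1 - z.2.2.1)),
         -(K12 (z.2.2.1, z.2.2.2)).mulVec (gradSnd n H z.1 z.2.2.2 + Ω • (z.2.2.2 - z.2.1)),
         (K12 (z.2.2.1, z.2.2.2))ᵀ.mulVec (gradFst n H z.2.2.1 z.2.1 + Ω • (z.2.2.1 - z.1))))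
    with hFdef
  set f : ℝ → (Fin n → ℝ) × (Fin n → ℝ) × (Fin n → ℝ) × (Fin n → ℝ) :=
    fun t => (p t, q t, x t, y t) with hfdef
  set g : ℝ → (Fin n → ℝ) × (Fin n → ℝ) × (Fin n → ℝ) × (Fin n → ℝ) :=
    fun t => (P t, Q t, P t, Q t) with hgdef
  have hmem : ∀ t ∈ Set.Ico 0 T, Set.Icc 0 T ∈ nhdsWithin t (Set.Ici t) := by
    intro t ht
    refine mem_nhdsWithin.mpr ⟨Set.Iio T, isOpen_Iio, ht.2, ?_⟩
    rintro s ⟨hs1, hs2⟩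
    exact ⟨le_trans ht.1 hs2, le_of_lt hs1⟩
  have hf' : ∀ t ∈ Set.Icc 0 T, HasDerivWithinAt f (F (f t)) (Set.Icc 0 T) t := by
    intro t ht
    exact ((hp t ht).prodMk ((hq t ht).prodMk ((hx t ht).prodMk (hy t ht))))
  have hg' : ∀ t ∈ Set.Icc 0 T, HasDerivWithinAt g (F (g t)) (Set.Icc 0 T) t := by
    intro t ht
    have h1 := hP t ht
    have h2 := hQ t ht
    have : F (g t) = ((-(K12 (P t, Q t)).mulVec (gradSnd n H (P t) (Q t))),
        ((K12 (P t, Q t))ᵀ.mulVec (gradFst n H (P t) (Q t))),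
        (-(K12 (P t, Q t)).mulVec (gradSnd n H (P t) (Q t))),
        ((K12 (P t, Q t))ᵀ.mulVec (gradFst n H (P t) (Q t)))) := by
      simp [hFdef, hgdef, sub_self, smul_zero]
    rw [this]
    exact (h1.prodMk (h2.prodMk (h1.prodMk h2)))
  have key : Set.EqOn f g (Set.Icc 0 T) := by
    apply ODE_solution_unique_of_mem_Icc_right
      (v := fun _ z => F z) (s := fun _ => Set.univ) (K := L)
      (fun _ _ => hF.lipschitzOnWith)
      (fun t ht => (hf' t ht).continuousWithinAt)
      (fun t ht => (hf' t (Set.Ico_subset_Icc_self ht)).mono_of_mem_nhdsWithin (hmem t ht))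
      (fun _ _ => trivial)
      (fun t ht => (hg' t ht).continuousWithinAt)
      (fun t ht => (hg' t (Set.Ico_subset_Icc_self ht)).mono_of_mem_nhdsWithin (hmem t ht))
      (fun _ _ => trivial)
    simp [hfdef, hgdef, hp0, hq0, hx0, hy0]
  intro t ht
  have := key ht
  simp only [hfdef, hgdef, Prod.mk.injEq] at this
  exact ⟨this.1, this.2.2.1, this.2.1, this.2.2.2⟩
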